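/- arXiv:1004.1116 — 5 statements merged into one kernel-verified Lean document; each statement's English description precedes it below -/
import Mathlib

section
/- Let q be a prime power, k = algebraic closure of F_q, and α ∈ F_{q²} \ F_q. For any unipotent g ∈ GL_n(k), the matrix α - α^q·g is invertible, and the map s(g) = (g - 1)(α - α^q g)⁻¹ sends unipotent matrices to nilpotent matrices; its inverse is s⁻¹(x) = (1 + α^q x)⁻¹(αx + 1), which sends nilpotent matrices to unipotent matrices. -/
section helpers
variable {R : Type*} [Ring R]

private lemma invEq' {b c : R} (h1 : b * c = 1) (h2 : c * b = 1) : Ring.inverse b = c := by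
  have hb : IsUnit b := ⟨⟨b, c, h1, h2⟩, rfl⟩
  calc Ring.inverse b = Ring.inverse b * (b * c) := by rw [h1, mul_one]
    _ = (Ring.inverse b * b) * c := (mul_assoc _ _ _).symm
    _ = c := by rw [Ring.inverse_mul_cancel b hb, one_mul]

private lemma commuteInv {a u : R} (hu : IsUnit u) (h : Commute a u) :
    Commute a (Ring.inverse u) := by
  obtain ⟨v, rfl⟩ := hu
  rw [Ring.inverse_unit]
  exact h.units_inv_right

end helpers

/-- for q a prime power, k an algebraic closure of F_q and α ∈ F_{q²} \ F_q,
the map s(g) = (g-1)(α - α^q g)⁻¹ sends unipotent matrices to nilpotent ones, α - α^q g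
being invertible, with inverse x ↦ (1 + α^q x)⁻¹(αx + 1) sending nilpotents to unipotents. -/
theorem stmt8 (p : ℕ) [Fact p.Prime] (m : ℕ) (hm : 0 < m)
    (k : Type*) [Field k] [IsAlgClosed k] [CharP k p]
    (q : ℕ) (hq : q = p ^ m)
    (α : k) (hα2 : α ^ q ^ 2 = α) (hα : α ^ q ≠ α) (n : ℕ) :
    (∀ g : Matrix (Fin n) (Fin n) k, (g - 1) ^ n = 0 →
      IsUnit (α • (1 : Matrix (Fin n) (Fin n) k) - α ^ q • g) ∧
      ((g - 1) * Ring.inverse (α • (1 : Matrix (Fin n) (Fin n) k) - α ^ q • g)) ^ n = 0 ∧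
      Ring.inverse (1 + α ^ q •
          ((g - 1) * Ring.inverse (α • (1 : Matrix (Fin n) (Fin n) k) - α ^ q • g))) *
        (α • ((g - 1) * Ring.inverse (α • (1 : Matrix (Fin n) (Fin n) k) - α ^ q • g)) + 1)
        = g) ∧
    (∀ x : Matrix (Fin n) (Fin n) k, x ^ n = 0 →
      IsUnit (1 + α ^ q • x) ∧
      ((Ring.inverse (1 + α ^ q • x) * (α • x + 1)) - 1) ^ n = 0 ∧
      ((Ring.inverse (1 + α ^ q • x) * (α • x + 1)) - 1) *
        Ring.inverse (α • (1 : Matrix (Fin n) (Fin n) k)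
          - α ^ q • (Ring.inverse (1 + α ^ q • x) * (α • x + 1))) = x) := by
  set R := Matrix (Fin n) (Fin n) k
  set δ : k := α - α ^ q with hδdef
  have hδ : δ ≠ 0 := sub_ne_zero_of_ne (Ne.symm hα)
  -- scalar matrices are central
  have central : ∀ (c : k) (a : R), Commute a (c • (1 : R)) :=
    fun c a => (Commute.one_right a).smul_right c
  constructor
  · intro g hg
    set u : R := α • (1 : R) - α ^ q • g with hu_def
    have hgu : Commute g u :=
      ((central α g).sub_right ((Commute.refl g).smul_right _))
    have hu : IsUnit u := by
      have heq : u = δ • (1 : R) + (-(α ^ q)) • (g - 1) := by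
        simp [hu_def, hδdef, sub_smul, smul_sub]
        abel
      rw [heq]
      exact (IsNilpotent.smul ⟨n, hg⟩ (-(α ^ q))).isUnit_add_left_of_commute
        (by
          refine ⟨⟨δ • (1 : R), δ⁻¹ • (1 : R), ?_, ?_⟩, rfl⟩ <;>
            simp [smul_mul_assoc, mul_smul_comm, smul_smul,
              mul_inv_cancel₀ hδ, inv_mul_cancel₀ hδ])
        (central δ _)
    set w : R := Ring.inverse u with hw_def
    have hone : (1 : R) = u * w := (Ring.mul_inverse_cancel u hu).symm
    have hone' : w * u = 1 := Ring.inverse_mul_cancel u hu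
    have hcw : Commute (g - 1) w :=
      commuteInv hu (hgu.sub_left (Commute.one_left u))
    refine ⟨hu, ?_, ?_⟩
    · rw [hcw.mul_pow, hg, zero_mul]
    · have key1 : u + α ^ q • (g - 1) = δ • (1 : R) := by
        rw [hu_def, hδdef, sub_smul, smul_sub]; abel
      have key2 : α • (g - 1) + u = δ • g := by
        rw [hu_def, hδdef, sub_smul, smul_sub]; abel
      have hA : (1 : R) + α ^ q • ((g - 1) * w) = δ • w := by
        calc (1 : R) + α ^ q • ((g - 1) * w)
            = u * w + (α ^ q • (g - 1)) * w := by
              rw [Ring.mul_inverse_cancel u hu, smul_mul_assoc]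
          _ = (u + α ^ q • (g - 1)) * w := (add_mul _ _ _).symm
          _ = (δ • (1 : R)) * w := by rw [key1]
          _ = δ • w := by rw [smul_mul_assoc, one_mul]
      have hB : α • ((g - 1) * w) + (1 : R) = δ • (g * w) := by
        calc α • ((g - 1) * w) + (1 : R)
            = (α • (g - 1)) * w + u * w := by
              rw [Ring.mul_inverse_cancel u hu, smul_mul_assoc]
          _ = (α • (g - 1) + u) * w := (add_mul _ _ _).symm
          _ = (δ • g) * w := by rw [key2]
          _ = δ • (g * w) := smul_mul_assoc _ _ _
      rw [hA, hB]
      have hinv : Ring.inverse (δ • w) = δ⁻¹ • u := by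
        refine invEq' ?_ ?_ <;>
          simp [smul_mul_assoc, mul_smul_comm, smul_smul, mul_inv_cancel₀ hδ,
            inv_mul_cancel₀ hδ, hone', ← hone]
      rw [hinv]
      calc (δ⁻¹ • u) * (δ • (g * w)) = (δ⁻¹ * δ) • (u * (g * w)) := by
            rw [smul_mul_assoc, mul_smul_comm, smul_smul]
        _ = u * g * w := by rw [inv_mul_cancel₀ hδ, one_smul, mul_assoc]
        _ = g * u * w := by rw [hgu.eq]
        _ = g := by rw [mul_assoc, ← hone, mul_one]
  · intro x hx
    set v : R := 1 + α ^ q • x with hv_def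
    have hxv : Commute x v :=
      (Commute.one_right x).add_right ((Commute.refl x).smul_right _)
    have hv : IsUnit v := (IsNilpotent.smul ⟨n, hx⟩ (α ^ q)).isUnit_one_add
    set w : R := Ring.inverse v with hw_def
    have hone : v * w = 1 := Ring.mul_inverse_cancel v hv
    have hone' : w * v = 1 := Ring.inverse_mul_cancel v hv
    have hcw : Commute x w := commuteInv hv hxv
    set g : R := w * (α • x + 1) with hg_def
    have hg1 : g - 1 = δ • (w * x) := by
      calc g - 1 = w * (α • x + 1) - w * v := by rw [hone', hg_def]
        _ = w * ((α • x + 1) - v) := by rw [mul_sub]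
        _ = w * (δ • x) := by
            congr 1
            rw [hv_def, hδdef, sub_smul]
            abel
        _ = δ • (w * x) := (mul_smul_comm _ _ _)
    refine ⟨hv, ?_, ?_⟩
    · rw [hg1, smul_pow, hcw.symm.mul_pow, hx, mul_zero, smul_zero]
    · have hαg : α • (1 : R) - α ^ q • (w * (α • x + 1)) = δ • w := by
        have h1 : α • (1 : R) = w * (α • v) := by
          rw [mul_smul_comm, hone']
        have h2 : α ^ q • (w * (α • x + 1)) = w * (α ^ q • (α • x + 1)) :=
          (mul_smul_comm _ _ _).symm
        rw [h1, h2, ← mul_sub]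
        have h3 : α • v - α ^ q • (α • x + 1) = δ • (1 : R) := by
          rw [hv_def, hδdef, sub_smul, smul_add, smul_add, smul_smul, smul_smul,
            mul_comm α (α ^ q)]
          abel
        rw [h3, mul_smul_comm, mul_one]
      rw [hαg, hg1]
      have hinv : Ring.inverse (δ • w) = δ⁻¹ • v := by
        refine invEq' ?_ ?_ <;>
          simp [smul_mul_assoc, mul_smul_comm, smul_smul, mul_inv_cancel₀ hδ,
            inv_mul_cancel₀ hδ, hone', hone]
      rw [hinv]
      calc (δ • (w * x)) * (δ⁻¹ • v) = (δ * δ⁻¹) • (w * x * v) := by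
            rw [smul_mul_assoc, mul_smul_comm, smul_smul]
        _ = w * (x * v) := by rw [mul_inv_cancel₀ hδ, one_smul, mul_assoc]
        _ = w * (v * x) := by rw [hxv.eq]
        _ = x := by rw [← mul_assoc, hone', one_mul]
end

section
/- Let q be a prime power and α ∈ F_{q²} \ F_q. Define Frobenius maps on n×n matrices over the algebraic closure k of F_q by F(g) = J_n·F_q(g⁻¹)ᵀ·J_n for g ∈ GL_n(k) (where F_q raises each entry to the q-th power) and F'(x) = J_n·F_q(x)ᵀ·J_n for x ∈ Mat_n(k). Then the map s(g) = (g-1)(α - α^q g)⁻¹ on unipotent elements satisfies s(F(g)) = F'(s(g)) for every unipotent g ∈ GL_n(k). -/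
open Matrix

theorem myRingInverseEq {M : Type*} [MonoidWithZero M] (a b : M)
    (h1 : a * b = 1) (h2 : b * a = 1) : Ring.inverse a = b :=
  Ring.inverse_unit (⟨a, b, h1, h2⟩ : Mˣ)

theorem myUnitHelper {k : Type*} [Field k] {n : ℕ} (c : k) (hc : c ≠ 0)
    (x : Matrix (Fin n) (Fin n) k) (hx : IsNilpotent x) :
    IsUnit (c • (1 : Matrix (Fin n) (Fin n) k) + x) := by
  have h1 : IsUnit ((1 : Matrix (Fin n) (Fin n) k) + c⁻¹ • x) :=
    (hx.smul c⁻¹).isUnit_one_add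
  have h2 : IsUnit (c • (1 : Matrix (Fin n) (Fin n) k)) := by
    refine ⟨⟨c • 1, c⁻¹ • 1, ?_, ?_⟩, rfl⟩
    · rw [smul_mul_assoc, one_mul, smul_smul, mul_inv_cancel₀ hc, one_smul]
    · rw [smul_mul_assoc, one_mul, smul_smul, inv_mul_cancel₀ hc, one_smul]
  have key : c • (1 : Matrix (Fin n) (Fin n) k) + x
      = (c • 1) * (1 + c⁻¹ • x) := by
    rw [mul_add, mul_one, smul_mul_assoc, one_mul, smul_smul, mul_inv_cancel₀ hc, one_smul]
  rw [key]
  exact h2.mul h1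

/-- the Springer morphism s(g) = (g-1)(α - α^q g)⁻¹ intertwines the unitary
Frobenius F(g) = Jₙ F_q(g⁻¹)ᵀ Jₙ on the group with F'(x) = Jₙ F_q(x)ᵀ Jₙ on the Lie
algebra: s(F(g)) = F'(s(g)) for every unipotent g. -/
theorem stmt9 (p : ℕ) [Fact p.Prime] (m : ℕ) (hm : 0 < m)
    (k : Type*) [Field k] [IsAlgClosed k] [CharP k p]
    (q : ℕ) (hq : q = p ^ m)
    (α : k) (hα2 : α ^ q ^ 2 = α) (hα : α ^ q ≠ α) (n : ℕ)
    (J : Matrix (Fin n) (Fin n) k)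
    (hJ : ∀ i j : Fin n, J i j = if (i : ℕ) + 1 + ((j : ℕ) + 1) = n + 1 then 1 else 0)
    (F : Matrix (Fin n) (Fin n) k → Matrix (Fin n) (Fin n) k)
    (hF : ∀ g, F g = J * ((Ring.inverse g).map (fun a => a ^ q))ᵀ * J)
    (F' : Matrix (Fin n) (Fin n) k → Matrix (Fin n) (Fin n) k)
    (hF' : ∀ x, F' x = J * (x.map (fun a => a ^ q))ᵀ * J)
    (s : Matrix (Fin n) (Fin n) k → Matrix (Fin n) (Fin n) k)
    (hs : ∀ g, s g = (g - 1) *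
      Ring.inverse (α • (1 : Matrix (Fin n) (Fin n) k) - α ^ q • g)) :
    ∀ g : Matrix (Fin n) (Fin n) k, (g - 1) ^ n = 0 → s (F g) = F' (s g) := by
  set fq : k →+* k := iterateFrobenius k p m with hfqdef
  have hfq : ∀ a : k, a ^ q = fq a := by
    intro a; rw [hq]; rfl
  have hmap : ∀ x : Matrix (Fin n) (Fin n) k, x.map (fun a => a ^ q) = x.map fq := by
    intro x; ext i j; simp [Matrix.map_apply, hfq]
  -- J is the reversal permutation matrix
  have hJ' : ∀ i j : Fin n, J i j = if j = i.rev then 1 else 0 := by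
    intro i j
    rw [hJ]
    have hi := i.isLt; have hj := j.isLt
    refine if_congr ?_ rfl rfl
    rw [Fin.ext_iff, Fin.val_rev]
    omega
  have hJJ : J * J = 1 := by
    ext i j
    rw [Matrix.mul_apply]
    simp only [hJ', Matrix.one_apply, ite_mul, one_mul, zero_mul]
    rw [Finset.sum_ite_eq' Finset.univ i.rev (fun l => if j = l.rev then (1:k) else 0)]
    simp [Matrix.one_apply, Fin.rev_rev, eq_comm]
  have hconj : ∀ A B : Matrix (Fin n) (Fin n) k, (J * A * J) * (J * B * J) = J * (A * B) * J := by
    intro A B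
    simp only [Matrix.mul_assoc]
    rw [← Matrix.mul_assoc J J (B * J), hJJ, Matrix.one_mul]
  -- F' is an anti-ring-endomorphism
  have F'one : F' 1 = 1 := by
    rw [hF', hmap, Matrix.map_one fq fq.map_zero fq.map_one, Matrix.transpose_one,
      Matrix.mul_one, hJJ]
  have F'zero : F' 0 = 0 := by
    rw [hF', hmap]
    simp [Matrix.map_zero]
  have F'mul : ∀ x y : Matrix (Fin n) (Fin n) k, F' (x * y) = F' y * F' x := by
    intro x y
    rw [hF', hF', hF', hmap, hmap, hmap, Matrix.map_mul, Matrix.transpose_mul, hconj]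
  have F'sub : ∀ x y : Matrix (Fin n) (Fin n) k, F' (x - y) = F' x - F' y := by
    intro x y
    rw [hF', hF', hF', hmap, hmap, hmap,
      Matrix.map_sub fq (fun a b => fq.map_sub a b), Matrix.transpose_sub,
      Matrix.mul_sub, Matrix.sub_mul]
  have F'smul : ∀ (c : k) (x : Matrix (Fin n) (Fin n) k), F' (c • x) = c ^ q • F' x := by
    intro c x
    have : (c • x).map fq = fq c • x.map fq := by
      ext i j; simp [Matrix.map_apply, smul_eq_mul]
    rw [hF', hF', hmap, hmap, this, Matrix.transpose_smul, Matrix.mul_smul,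
      Matrix.smul_mul, hfq]
  have F'pow : ∀ (x : Matrix (Fin n) (Fin n) k) (j : ℕ), (F' x) ^ j = F' (x ^ j) := by
    intro x j
    induction j with
    | zero => rw [pow_zero, pow_zero, F'one]
    | succ j ih => rw [pow_succ, ih, ← F'mul, ← pow_succ']
  -- main argument
  intro g hg
  have hnil : IsNilpotent (g - 1) := ⟨n, hg⟩
  have hug : IsUnit g := by
    have := hnil.isUnit_add_left_of_commute isUnit_one (Commute.one_right _)
    simpa using this
  set g' := Ring.inverse g with hg'
  have hgg' : g * g' = 1 := Ring.mul_inverse_cancel g hug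
  have hg'g : g' * g = 1 := Ring.inverse_mul_cancel g hug
  set h := F' g with hh
  set h' := F' g' with hh'
  have hinv1 : h * h' = 1 := by
    rw [hh, hh', ← F'mul, hg'g, F'one]
  have hinv2 : h' * h = 1 := by
    rw [hh, hh', ← F'mul, hgg', F'one]
  have hδ : α ^ q - α ≠ 0 := sub_ne_zero.mpr hα
  have hδ' : α - α ^ q ≠ 0 := sub_ne_zero.mpr (Ne.symm hα)
  have hα2' : (α ^ q) ^ q = α := by
    rw [← pow_mul, ← pow_two] at *
    exact hα2
  have hh1 : IsNilpotent (h - 1) := by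
    refine ⟨n, ?_⟩
    rw [show h - 1 = F' (g - 1) by rw [F'sub, F'one], F'pow, hg, F'zero]
  set A : Matrix (Fin n) (Fin n) k := α • 1 - α ^ q • g with hA
  set B : Matrix (Fin n) (Fin n) k := α ^ q • 1 - α • h with hB
  have huA : IsUnit A := by
    have e : A = (α - α ^ q) • (1 : Matrix (Fin n) (Fin n) k) + (-(α ^ q)) • (g - 1) := by
      rw [hA]; module
    rw [e]
    exact myUnitHelper _ hδ' _ (hnil.smul _)
  have huB : IsUnit B := by
    have e : B = (α ^ q - α) • (1 : Matrix (Fin n) (Fin n) k) + (-α) • (h - 1) := by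
      rw [hB]; module
    rw [e]
    exact myUnitHelper _ hδ _ (hh1.smul _)
  have hFA : F' A = B := by
    rw [hA, hB, F'sub, F'smul, F'smul, F'one, hα2']
  set iA := Ring.inverse A with hiA
  set iB := Ring.inverse B with hiB
  have hAiA : A * iA = 1 := Ring.mul_inverse_cancel A huA
  have hiAA : iA * A = 1 := Ring.inverse_mul_cancel A huA
  have hBiB : B * iB = 1 := Ring.mul_inverse_cancel B huB
  have hiBB : iB * B = 1 := Ring.inverse_mul_cancel B huB
  have hF'iA : F' iA = iB := by
    have e1 : B * F' iA = 1 := by rw [← hFA, ← F'mul, hiAA, F'one]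
    have e2 : F' iA * B = 1 := by rw [← hFA, ← F'mul, hAiA, F'one]
    rw [hiB]
    exact (myRingInverseEq B (F' iA) e1 e2).symm
  -- RHS
  have hRHS : F' (s g) = iB * (h - 1) := by
    rw [hs, ← hA, ← hiA, F'mul, hF'iA, F'sub, F'one, ← hh]
  -- LHS
  have hFg : F g = h' := by
    rw [hF, hh', hF', ← hg']
  set C : Matrix (Fin n) (Fin n) k := α • (1 : Matrix (Fin n) (Fin n) k) - α ^ q • h' with hC
  have hCeq : C = (-B) * h' := by
    rw [hC, hB, neg_sub, Matrix.sub_mul, Matrix.smul_mul, Matrix.smul_mul, hinv1, one_mul]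
  have hiC : Ring.inverse C = h * (-iB) := by
    refine myRingInverseEq C (h * (-iB)) ?_ ?_
    · rw [hCeq, mul_assoc, ← mul_assoc h' h, hinv2, one_mul, neg_mul_neg, hBiB]
    · rw [hCeq, ← mul_assoc, mul_assoc h (-iB) (-B), neg_mul_neg, hiBB, mul_one, hinv1]
  have hLHS : s (F g) = (h - 1) * iB := by
    rw [hs, hFg, ← hC, hiC, ← mul_assoc, Matrix.sub_mul, hinv2]
    noncomm_ring
  -- commuting step
  have c1 : Commute (h - 1) B := by
    have ch : Commute (h - 1) h := (Commute.refl h).sub_left (Commute.one_left h)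
    exact ((Commute.one_right (h - 1)).smul_right (α ^ q)).sub_right (ch.smul_right α)
  have hcomm : (h - 1) * iB = iB * (h - 1) := by
    have h1 : B * ((h - 1) * iB) = h - 1 := by
      rw [← mul_assoc, ← c1.eq, mul_assoc, hBiB, mul_one]
    calc (h - 1) * iB = iB * (B * ((h - 1) * iB)) := by
          rw [← mul_assoc, hiBB, one_mul]
      _ = iB * (h - 1) := by rw [h1]
  rw [hLHS, hRHS, hcomm]
end

section
/- Let q be a prime power with q odd, k an algebraic closure of F_q, and F(g) = J_n·F_q(g⁻¹)ᵀ·J_n the unitary Frobenius on GL_n(k). If x ∈ Mat_n(k) is nilpotent with F'(x) = x (where F'(y) = J_n F_q(y)ᵀ J_n), and α ∈ F_{q²}\F_q, then u = (1 + α^q x)⁻¹(αx + 1) is a unipotent element fixed by F, i.e. u lies in the finite unitary group GU_n(F_q). -/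
open Matrix

/-- for q an odd prime power, if x is nilpotent and fixed by the unitary
Frobenius F' on the Lie algebra, then u = (1 + α^q x)⁻¹(αx + 1) is unipotent and fixed
by the unitary Frobenius F on the group, i.e. u ∈ GUₙ(F_q). -/
theorem stmt11 (p : ℕ) [Fact p.Prime] (m : ℕ) (hm : 0 < m)
    (k : Type*) [Field k] [IsAlgClosed k] [CharP k p]
    (q : ℕ) (hq : q = p ^ m) (hqodd : Odd q)
    (α : k) (hα2 : α ^ q ^ 2 = α) (hα : α ^ q ≠ α) (n : ℕ)
    (J : Matrix (Fin n) (Fin n) k)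
    (hJ : ∀ i j : Fin n, J i j = if (i : ℕ) + 1 + ((j : ℕ) + 1) = n + 1 then 1 else 0)
    (F : Matrix (Fin n) (Fin n) k → Matrix (Fin n) (Fin n) k)
    (hF : ∀ g, F g = J * ((Ring.inverse g).map (fun a => a ^ q))ᵀ * J)
    (F' : Matrix (Fin n) (Fin n) k → Matrix (Fin n) (Fin n) k)
    (hF' : ∀ y, F' y = J * (y.map (fun a => a ^ q))ᵀ * J)
    (x : Matrix (Fin n) (Fin n) k) (hx : x ^ n = 0) (hxF : F' x = x)
    (u : Matrix (Fin n) (Fin n) k)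
    (hu : u = Ring.inverse (1 + α ^ q • x) * (α • x + 1)) :
    (u - 1) ^ n = 0 ∧ F u = u := by
  set φ : k →+* k := iterateFrobenius k p m with hφdef
  have hφq : ∀ a : k, φ a = a ^ q := by
    intro a; rw [hφdef]; rw [iterateFrobenius_def, hq]
  -- J * J = 1
  have hJJ : J * J = 1 := by
    ext i j
    rw [Matrix.mul_apply, Matrix.one_apply]
    have hi : (i : ℕ) < n := i.isLt
    have hjn : (j : ℕ) < n := j.isLt
    set l0 : Fin n := ⟨n - 1 - i, by omega⟩ with hl0
    have hl0v : (l0 : ℕ) = n - 1 - i := rfl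
    rw [Finset.sum_eq_single l0]
    · rw [hJ, hJ, hl0v, if_pos (by omega)]
      by_cases h : i = j
      · subst h; rw [if_pos (by omega), if_pos rfl, one_mul]
      · have hv : (i : ℕ) ≠ j := fun hc => h (Fin.ext hc)
        rw [if_neg (by omega), if_neg h, one_mul]
    · intro b _ hb
      have hbv : (b : ℕ) ≠ n - 1 - i := fun hc => hb (Fin.ext hc)
      rw [hJ, if_neg (by omega), zero_mul]
    · intro h; exact absurd (Finset.mem_univ l0) h
  -- nilpotency and units
  have hxn : IsNilpotent x := ⟨n, hx⟩
  have hv : IsUnit (1 + α ^ q • x) := (hxn.smul (α ^ q)).isUnit_one_add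
  have hw : IsUnit (1 + α • x) := (hxn.smul α).isUnit_one_add
  set v := hv.unit with hvdef
  set w := hw.unit with hwdef
  have hvc : (v : Matrix (Fin n) (Fin n) k) = 1 + α ^ q • x := hv.unit_spec
  have hwc : (w : Matrix (Fin n) (Fin n) k) = 1 + α • x := hw.unit_spec
  have hinv : Ring.inverse (1 + α ^ q • x) = (↑v⁻¹ : Matrix (Fin n) (Fin n) k) := by
    rw [← hvc, Ring.inverse_unit]
  have hu' : u = (↑v⁻¹ : Matrix (Fin n) (Fin n) k) * (α • x + 1) := by rw [hu, hinv]
  -- commutation facts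
  have cxv : Commute x (v : Matrix (Fin n) (Fin n) k) := by
    rw [hvc]
    exact (Commute.one_right x).add_right ((Commute.refl x).smul_right _)
  have cxvi : Commute x (↑v⁻¹ : Matrix (Fin n) (Fin n) k) := cxv.units_inv_right
  -- part 1
  have part1 : (u - 1) ^ n = 0 := by
    have hu1 : u - 1 = (↑v⁻¹ : Matrix (Fin n) (Fin n) k) * ((α - α ^ q) • x) := by
      have key : (↑v⁻¹ : Matrix (Fin n) (Fin n) k) * (α • x + 1)
          - (↑v⁻¹ : Matrix (Fin n) (Fin n) k) * (↑v : Matrix (Fin n) (Fin n) k)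
          = (↑v⁻¹ : Matrix (Fin n) (Fin n) k) * ((α - α ^ q) • x) := by
        rw [← mul_sub, hvc]
        congr 1
        rw [sub_smul]
        abel
      rw [v.inv_mul] at key
      rw [hu']
      exact key
    rw [hu1, (cxvi.smul_left (α - α ^ q)).symm.mul_pow, smul_pow, hx, smul_zero,
      mul_zero]
  refine ⟨part1, ?_⟩
  -- map and conjugation machinery
  have hmap : ∀ M : Matrix (Fin n) (Fin n) k, M.map (fun a => a ^ q) = M.map φ := by
    intro M; ext i j; simp [hφq]
  have hmapsmul : ∀ (c : k) (M : Matrix (Fin n) (Fin n) k),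
      (c • M).map φ = φ c • M.map φ := by
    intro c M; ext i j
    simp [Matrix.map_apply, Matrix.smul_apply, smul_eq_mul, _root_.map_mul]
  set T : Matrix (Fin n) (Fin n) k → Matrix (Fin n) (Fin n) k :=
    fun M => J * Mᵀ * J with hT
  have hTmul : ∀ M N, T (M * N) = T N * T M := by
    intro M N
    simp only [hT, Matrix.transpose_mul]
    calc J * (Nᵀ * Mᵀ) * J = J * Nᵀ * (J * J) * Mᵀ * J := by
          rw [hJJ]; noncomm_ring
      _ = (J * Nᵀ * J) * (J * Mᵀ * J) := by noncomm_ring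
  have hTone : T 1 = 1 := by simp only [hT, Matrix.transpose_one, mul_one, hJJ]
  have hTsmul : ∀ (c : k) M, T (c • M) = c • T M := by
    intro c M
    simp only [hT, Matrix.transpose_smul, Matrix.mul_smul, Matrix.smul_mul]
  have hTadd : ∀ M N, T (M + N) = T M + T N := by
    intro M N
    simp only [hT, Matrix.transpose_add, Matrix.add_mul, Matrix.mul_add]
  have hTx : T (x.map φ) = x := by
    show J * (x.map φ)ᵀ * J = x
    rw [← hmap x, ← hF']; exact hxF
  -- value of T ∘ map φ on the two generators
  have hαq2 : (α ^ q) ^ q = α := by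
    rw [← pow_mul, ← pow_two, hα2]
  have hTv : T ((v : Matrix (Fin n) (Fin n) k).map φ) = ↑w := by
    rw [hvc, hwc]
    have h2 : ((1 : Matrix (Fin n) (Fin n) k) + α ^ q • x).map φ
        = 1 + α • x.map φ := by
      rw [Matrix.map_add _ (map_add φ), hmapsmul, Matrix.map_one φ φ.map_zero φ.map_one,
        hφq, hαq2]
    rw [h2, hTadd, hTone, hTsmul, hTx]
  have hTw : T ((w : Matrix (Fin n) (Fin n) k).map φ) = ↑v := by
    rw [hwc, hvc]
    have h2 : ((1 : Matrix (Fin n) (Fin n) k) + α • x).map φ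
        = 1 + α ^ q • x.map φ := by
      rw [Matrix.map_add _ (map_add φ), hmapsmul, Matrix.map_one φ φ.map_zero φ.map_one, hφq]
    rw [h2, hTadd, hTone, hTsmul, hTx]
  -- T (map φ w⁻¹) = v⁻¹
  have hTwinv : T ((↑w⁻¹ : Matrix (Fin n) (Fin n) k).map φ)
      = (↑v⁻¹ : Matrix (Fin n) (Fin n) k) := by
    have h1 : T ((↑w⁻¹ : Matrix (Fin n) (Fin n) k).map φ)
        * (↑v : Matrix (Fin n) (Fin n) k) = 1 := by
      rw [← hTw, ← hTmul, ← Matrix.map_mul, w.mul_inv,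
        Matrix.map_one φ φ.map_zero φ.map_one, hTone]
    calc T ((↑w⁻¹ : Matrix (Fin n) (Fin n) k).map φ)
        = T ((↑w⁻¹ : Matrix (Fin n) (Fin n) k).map φ)
          * ((↑v : Matrix (Fin n) (Fin n) k) * ↑v⁻¹) := by
          rw [v.mul_inv, mul_one]
      _ = (↑v⁻¹ : Matrix (Fin n) (Fin n) k) := by rw [← mul_assoc, h1, one_mul]
  -- Ring.inverse u
  have huu : u = ↑(v⁻¹ * w) := by
    rw [hu', Units.val_mul]
    congr 1
    rw [hwc]
    exact add_comm _ _
  have hinvu : Ring.inverse u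
      = (↑w⁻¹ : Matrix (Fin n) (Fin n) k) * (↑v : Matrix (Fin n) (Fin n) k) := by
    rw [huu, Ring.inverse_unit, _root_.mul_inv_rev, inv_inv, Units.val_mul]
  -- finish
  have cAB : Commute (α ^ q • x : Matrix (Fin n) (Fin n) k) (α • x) :=
    ((Commute.refl x).smul_left (α ^ q)).smul_right α
  have cvw0 : Commute ((1 : Matrix (Fin n) (Fin n) k) + α ^ q • x) (1 + α • x) :=
    (Commute.one_right _).add_right ((Commute.one_left _).add_left cAB)
  have cvw : Commute (v : Matrix (Fin n) (Fin n) k) ↑w := by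
    rw [hvc, hwc]; exact cvw0
  have cviw : Commute (↑v⁻¹ : Matrix (Fin n) (Fin n) k) ↑w := cvw.units_inv_left
  rw [hF, hmap, hinvu, Matrix.map_mul]
  show T _ = u
  rw [hTmul, hTv, hTwinv, huu, Units.val_mul]
  exact cviw.eq.symm
end

section
/- Let μ be a partition of n with at least one odd part and at least one even part, and let i be minimal with μ_i - μ_{i+1} odd (where μ_{r+1} = 0 if needed). Then every integer m with -μ_{i+1} ≤ m ≤ μ_{i+1} occurs in the multiset Y = ⋃_j {μ_j - 1, μ_j - 3, …, 1 - μ_j}. -/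
/-- The multiset Y = ⋃_i {μ_i - 1, μ_i - 3, …, 1 - μ_i} attached to a partition μ. -/
def Ymul {n : ℕ} (μ : n.Partition) : Multiset ℤ :=
  μ.parts.bind fun m => (Multiset.range m).map fun j => (m : ℤ) - 1 - 2 * (j : ℤ)

lemma mem_Ymul_of {n : ℕ} {μ : n.Partition} {m : ℕ} (hm : m ∈ μ.parts) {x : ℤ}
    (h1 : -(m : ℤ) < x) (h2 : x < m) (hp : (2 : ℤ) ∣ ((m : ℤ) - 1 - x)) : x ∈ Ymul μ := by
  obtain ⟨k, hk⟩ := hp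
  have hk0 : 0 ≤ k := by omega
  lift k to ℕ using hk0
  refine Multiset.mem_bind.2 ⟨m, hm, Multiset.mem_map.2 ⟨(k : ℤ), ?_, by omega⟩⟩
  exact Multiset.mem_bind.2 ⟨k, Multiset.mem_range.2 (by omega), Multiset.mem_singleton.2 rfl⟩

/-- if μ has both odd and even parts and i is minimal with μ_i - μ_{i+1} odd
(parts sorted decreasingly, with μ_{r+1} = 0), then every integer m with
-μ_{i+1} ≤ m ≤ μ_{i+1} occurs in the multiset Y. -/
theorem stmt13 (n : ℕ) (μ : n.Partition)
    (ho : ∃ m ∈ μ.parts, Odd m) (he : ∃ m ∈ μ.parts, Even m)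
    (part : ℕ → ℕ)
    (hpart : part = fun i => ((μ.parts.sort (· ≤ ·)).reverse).getD i 0)
    (i : ℕ) (hi : Odd (part i - part (i + 1)))
    (hmin : ∀ j < i, Even (part j - part (j + 1))) :
    ∀ x : ℤ, -(part (i + 1) : ℤ) ≤ x → x ≤ (part (i + 1) : ℤ) → x ∈ Ymul μ := by
  set L := ((μ.parts.sort (· ≤ ·)).reverse) with hL
  have hmemL : ∀ y, y ∈ L → y ∈ μ.parts := by
    intro y hy
    rw [hL, List.mem_reverse, Multiset.mem_sort] at hy
    exact hy
  have hmem : ∀ j, 0 < part j → part j ∈ μ.parts := by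
    intro j hj
    by_cases hjl : j < L.length
    · apply hmemL
      rw [hpart]
      simp only
      rw [List.getD_eq_getElem _ _ hjl]
      exact List.getElem_mem _
    · exfalso
      rw [hpart] at hj
      simp only at hj
      rw [List.getD_eq_default _ _ (not_lt.1 hjl)] at hj
      exact absurd hj (lt_irrefl 0)
  have hsorted : L.Pairwise (fun a b => b ≤ a) := by
    rw [hL, List.pairwise_reverse]
    exact Multiset.pairwise_sort _ _
  have hmono : part (i + 1) ≤ part i := by
    rw [hpart]; simp only
    by_cases h1 : i + 1 < L.length
    · rw [List.getD_eq_getElem _ _ h1, List.getD_eq_getElem _ _ (by omega)]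
      exact List.Pairwise.rel_get_of_lt hsorted (a := ⟨i, by omega⟩) (b := ⟨i + 1, h1⟩)
        (by simp [Fin.lt_def])
    · rw [List.getD_eq_default _ _ (not_lt.1 h1)]
      exact Nat.zero_le _
  intro x hx1 hx2
  set a := part i with ha
  set b := part (i + 1) with hb
  obtain ⟨c, hc⟩ := hi
  have habz : (a : ℤ) = (b : ℤ) + 2 * (c : ℤ) + 1 := by
    have : a = b + 2 * c + 1 := by omega
    exact_mod_cast congrArg (Nat.cast : ℕ → ℤ) this
  by_cases hd : (2 : ℤ) ∣ ((a : ℤ) - 1 - x)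
  · exact mem_Ymul_of (hmem i (by omega)) (by omega) (by omega) hd
  · have hd' : (2 : ℤ) ∣ ((b : ℤ) - 1 - x) := by
      rcases Int.even_or_odd ((a : ℤ) - 1 - x) with h | h
      · exact absurd h.two_dvd hd
      · obtain ⟨k, hk⟩ := h
        exact ⟨k - c, by omega⟩
    obtain ⟨k, hk⟩ := hd'
    have hodd : ∃ k' : ℤ, (a : ℤ) - 1 - x = 2 * k' + 1 := by
      rcases Int.even_or_odd ((a : ℤ) - 1 - x) with h | h
      · exact absurd h.two_dvd hd
      · obtain ⟨k', hk'⟩ := h; exact ⟨k', by omega⟩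
    obtain ⟨k', hk'⟩ := hodd
    have hbpos : 0 < b := by omega
    exact mem_Ymul_of (hmem (i + 1) hbpos) (by omega) (by omega) ⟨k, hk⟩
end

section
/- Let k be a field and μ a partition of n in which some part is odd occurring with odd multiplicity. Then there is no nilpotent n×n matrix x of Jordan type μ satisfying xᵀM + Mx = 0 for M = [[0, J_l],[-J_l, 0]] (n = 2l). Equivalently, the Jordan type of any element of sp_{2l}(k) has each odd part occurring with even multiplicity. -/
open Matrix Module

universe u v

/-- An alternating bilinear form on a finite-dimensional space has even rank
 (recorded as `finrank V - finrank (ker B)`). -/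
theorem even_alt_rank {k : Type u} [Field k] :
    ∀ (n : ℕ) (V : Type v) [AddCommGroup V] [Module k V] [FiniteDimensional k V],
      Module.finrank k V ≤ n → ∀ (B : V →ₗ[k] V →ₗ[k] k), (∀ x, B x x = 0) →
      Even (Module.finrank k V - Module.finrank k (LinearMap.ker B)) := by
  intro n
  induction n with
  | zero =>
    intro V _ _ _ hV B _
    have h0 : Module.finrank k V = 0 := Nat.le_zero.mp hV
    simp [h0]
  | succ n ih =>
    intro V _ _ _ hV B halt
    have hskew : ∀ x y : V, B x y = - B y x := by
      intro x y
      have h := halt (x + y)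
      simp only [map_add, LinearMap.add_apply, halt x, halt y] at h
      linear_combination h
    by_cases hB0 : B = 0
    · subst hB0
      rw [LinearMap.ker_zero, finrank_top, Nat.sub_self]
      exact Even.zero
    · -- pick u, v with B u v = 1
      obtain ⟨u, hu⟩ : ∃ u, B u ≠ 0 := by
        by_contra h
        push_neg at h
        exact hB0 (LinearMap.ext fun x => h x)
      obtain ⟨v', hv'⟩ : ∃ v', B u v' ≠ 0 := by
        by_contra h
        push_neg at h
        exact hu (LinearMap.ext fun y => h y)
      set v : V := (B u v')⁻¹ • v' with hv_def
      have huv : B u v = 1 := by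
        simp [hv_def, _root_.map_smul, inv_mul_cancel₀ hv']
      have hvu : B v u = -1 := by rw [hskew v u, huv]
      set W : Submodule k V := LinearMap.ker (B u) ⊓ LinearMap.ker (B v) with hW
      -- finrank V = finrank W + 2
      set φ : V →ₗ[k] k × k := (B u).prod (B v) with hφ
      have hkerφ : LinearMap.ker φ = W := by
        ext x
        simp [hφ, LinearMap.mem_ker, Prod.ext_iff, hW, Submodule.mem_inf]
      have hrangeφ : LinearMap.range φ = ⊤ := by
        rw [eq_top_iff]
        rintro ⟨a, b⟩ -
        have h1 : φ v = (1, 0) := by simp [hφ, huv, halt]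
        have h2 : φ u = (0, -1) := by simp [hφ, halt, hvu]
        have : φ (a • v - b • u) = (a, b) := by
          simp [map_sub, _root_.map_smul, h1, h2, Prod.ext_iff]
        exact ⟨a • v - b • u, this⟩
      have hdim : Module.finrank k V = Module.finrank k W + 2 := by
        have := LinearMap.finrank_range_add_finrank_ker φ
        rw [hrangeφ, hkerφ] at this
        have h2 : Module.finrank k (⊤ : Submodule k (k × k)) = 2 := by
          simp [finrank_top]
        omega
      -- restricted form
      set B' : W →ₗ[k] W →ₗ[k] k := B.domRestrict₁₂ W W with hB'
      have halt' : ∀ x : W, B' x x = 0 := fun x => halt x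
      -- kernels agree
      have hker : (LinearMap.ker B').map W.subtype = LinearMap.ker B := by
        apply le_antisymm
        · rintro _ ⟨⟨x, hxW⟩, hx, rfl⟩
          simp only [SetLike.mem_coe, LinearMap.mem_ker] at hx
          simp only [Submodule.subtype_apply, LinearMap.mem_ker]
          ext z
          -- decompose z
          set w : V := z - (B u z) • v + (B v z) • u with hw_def
          have hwW : w ∈ W := by
            constructor
            · simp [hw_def, map_sub, map_add, _root_.map_smul, huv, halt]
            · simp [hw_def, map_sub, map_add, _root_.map_smul, hvu, halt]
          have hz : z = (B u z) • v - (B v z) • u + w := by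
            rw [hw_def]; abel
          have hxu : B x u = 0 := by
            rw [hskew]
            rw [hW, Submodule.mem_inf] at hxW
            exact neg_eq_zero.mpr hxW.1
          have hxv : B x v = 0 := by
            rw [hskew]
            rw [hW, Submodule.mem_inf] at hxW
            exact neg_eq_zero.mpr hxW.2
          have hxw : B x w = 0 := by
            have := congrArg (fun f => f ⟨w, hwW⟩) hx
            simpa [hB', LinearMap.domRestrict₁₂_apply] using this
          rw [hz]
          simp [map_add, map_sub, _root_.map_smul, hxu, hxv, hxw]
        · intro x hx
          rw [LinearMap.mem_ker] at hx
          have hxu : B u x = 0 := by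
            rw [hskew]; simp [hx]
          have hxv : B v x = 0 := by
            rw [hskew]; simp [hx]
          have hxW : x ∈ W := ⟨hxu, hxv⟩
          refine ⟨⟨x, hxW⟩, ?_, rfl⟩
          simp only [SetLike.mem_coe, LinearMap.mem_ker]
          ext y
          simp [hB', LinearMap.domRestrict₁₂_apply, hx]
      have hkerdim : Module.finrank k (LinearMap.ker B) = Module.finrank k (LinearMap.ker B') := by
        rw [← hker]
        exact (Submodule.finrank_map_subtype_eq W _)
      have hWle : Module.finrank k W ≤ n := by omega
      have hind := ih W hWle B' halt'
      have hle : Module.finrank k (LinearMap.ker B') ≤ Module.finrank k W :=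
        Submodule.finrank_le _
      rw [hdim, hkerdim]
      obtain ⟨c, hc⟩ := hind
      exact ⟨c + 1, by omega⟩


/-- A skew-symmetric matrix over a field of characteristic ≠ 2 has even rank. -/
theorem even_rank_of_skew {k : Type*} [Field k] (h2 : (2 : k) ≠ 0)
    {n : Type*} [Fintype n] [DecidableEq n]
    (A : Matrix n n k) (hA : Aᵀ = -A) : Even A.rank := by
  classical
  set B : (n → k) →ₗ[k] (n → k) →ₗ[k] k :=
    LinearMap.mk₂ k (fun x y => x ⬝ᵥ A.mulVec y)
      (fun x x' y => by simp [add_dotProduct])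
      (fun c x y => by simp [smul_dotProduct])
      (fun x y y' => by simp [Matrix.mulVec_add, dotProduct_add])
      (fun c x y => by simp [Matrix.mulVec_smul, dotProduct_smul]) with hB
  have halt : ∀ x, B x x = 0 := by
    intro x
    have key : x ⬝ᵥ A.mulVec x = -(x ⬝ᵥ A.mulVec x) := by
      conv_lhs => rw [Matrix.dotProduct_mulVec]
      have h1 : Matrix.vecMul x A = -(A.mulVec x) := by
        rw [← Matrix.mulVec_transpose, hA, Matrix.neg_mulVec]
      rw [h1, neg_dotProduct, dotProduct_comm]
    have h2c : (2 : k) * (x ⬝ᵥ A.mulVec x) = 0 := by linear_combination key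
    have := mul_eq_zero.mp h2c
    simpa [h2, hB, LinearMap.mk₂_apply] using this.resolve_left h2
  have hker : LinearMap.ker B = LinearMap.ker (Aᵀ.mulVecLin) := by
    ext x
    simp only [LinearMap.mem_ker, Matrix.mulVecLin_apply]
    constructor
    · intro hx
      have h1 : ∀ y, Matrix.vecMul x A ⬝ᵥ y = 0 := by
        intro y
        have := congrArg (fun f => f y) hx
        simpa [hB, LinearMap.mk₂_apply, Matrix.dotProduct_mulVec] using this
      rw [Matrix.mulVec_transpose]
      funext j
      simpa [dotProduct_single] using h1 (Pi.single j 1)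
    · intro hx
      ext y
      have h1 : Matrix.vecMul x A = 0 := by rwa [← Matrix.mulVec_transpose]
      simp [hB, LinearMap.mk₂_apply, Matrix.dotProduct_mulVec, h1]
  have hrk := LinearMap.finrank_range_add_finrank_ker (Aᵀ.mulVecLin)
  have hpi : Module.finrank k (n → k) = Fintype.card n := Module.finrank_pi k
  have hAt : (Aᵀ).rank = A.rank := Matrix.rank_transpose A
  have hAle : A.rank ≤ Fintype.card n := Matrix.rank_le_card_width A
  have hmain := even_alt_rank (k := k) (Fintype.card n) (n → k) (le_of_eq hpi) B halt
  rw [hker] at hmain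
  have hkerdim : Module.finrank k (LinearMap.ker (Aᵀ.mulVecLin)) = Fintype.card n - A.rank := by
    have h3 : (Aᵀ).rank = Module.finrank k (LinearMap.range (Aᵀ.mulVecLin)) := rfl
    omega
  rw [hpi, hkerdim] at hmain
  have : Fintype.card n - (Fintype.card n - A.rank) = A.rank := by omega
  rwa [this] at hmain

/-- if a partition μ of 2l has an odd part occurring with odd multiplicity,
then no nilpotent matrix of Jordan type μ lies in sp_{2l}(k) (M = [[0,J],[-J,0]]); here
the Jordan type is recorded by the multiplicities
count_μ(m) = rank x^{m-1} - 2 rank x^m + rank x^{m+1}. -/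
theorem stmt19 (k : Type*) [Field k] (h2 : (2 : k) ≠ 0) (l : ℕ)
    (μ : (2 * l).Partition)
    (hbad : ∃ m, Odd m ∧ Odd (μ.parts.count m))
    (J : Matrix (Fin l) (Fin l) k)
    (hJ : ∀ i j : Fin l, J i j = if (i : ℕ) + 1 + ((j : ℕ) + 1) = l + 1 then 1 else 0)
    (M : Matrix (Fin l ⊕ Fin l) (Fin l ⊕ Fin l) k)
    (hM : M = Matrix.fromBlocks 0 J (-J) 0) :
    ¬ ∃ X : Matrix (Fin l ⊕ Fin l) (Fin l ⊕ Fin l) k,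
        X ^ (2 * l) = 0 ∧ Xᵀ * M + M * X = 0 ∧
        (∀ m : ℕ, 1 ≤ m → (μ.parts.count m : ℤ) =
          ((X ^ (m - 1)).rank : ℤ) + ((X ^ (m + 1)).rank : ℤ) - 2 * ((X ^ m).rank : ℤ)) := by
  rintro ⟨X, -, hsp, hcount⟩
  obtain ⟨m, hmodd, hcodd⟩ := hbad
  have hXM : Xᵀ * M = -(M * X) := eq_neg_of_add_eq_zero_left hsp
  -- J is symmetric
  have hJsym : Jᵀ = J := by
    ext i j
    rw [Matrix.transpose_apply, hJ, hJ]
    congr 1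
    simp only [eq_iff_iff]
    omega
  -- M is skew-symmetric
  have hMt : Mᵀ = -M := by
    rw [hM]
    rw [Matrix.fromBlocks_transpose]
    simp [hJsym, Matrix.fromBlocks_neg]
  -- J * J = 1
  have hJJ : J * J = 1 := by
    ext i j
    have hl : 0 < l := i.pos
    rw [Matrix.mul_apply]
    simp_rw [hJ]
    set p0 : Fin l := ⟨l - 1 - (i : ℕ), by omega⟩ with hp0
    have h1 : ∀ p : Fin l, ((i : ℕ) + 1 + ((p : ℕ) + 1) = l + 1) ↔ p = p0 := by
      intro p
      rw [Fin.ext_iff]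
      have := p.isLt
      have := i.isLt
      simp only [hp0]
      constructor <;> intro h <;> omega
    simp_rw [h1]
    simp only [ite_mul, one_mul, zero_mul]
    rw [Finset.sum_ite_eq' Finset.univ p0
      (fun p => (if (p : ℕ) + 1 + ((j : ℕ) + 1) = l + 1 then (1 : k) else 0))]
    have hi := i.isLt
    have hj := j.isLt
    rw [if_pos (Finset.mem_univ p0), Matrix.one_apply]
    congr 1
    simp only [eq_iff_iff, Fin.ext_iff, hp0]
    omega
  -- M is invertible with inverse N
  set N : Matrix (Fin l ⊕ Fin l) (Fin l ⊕ Fin l) k := Matrix.fromBlocks 0 (-J) J 0 with hN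
  have hMN : M * N = 1 := by
    rw [hM, hN, Matrix.fromBlocks_multiply]
    simp [hJJ, ← Matrix.fromBlocks_one]
  have hNM : N * M = 1 := mul_eq_one_comm.mp hMN
  -- left multiplication by M preserves rank
  have hrank : ∀ B : Matrix (Fin l ⊕ Fin l) (Fin l ⊕ Fin l) k, (M * B).rank = B.rank := by
    intro B
    refine le_antisymm (Matrix.rank_mul_le_right M B) ?_
    have hB : N * (M * B) = B := by rw [← Matrix.mul_assoc, hNM, Matrix.one_mul]
    calc B.rank = (N * (M * B)).rank := by rw [hB]
      _ ≤ (M * B).rank := Matrix.rank_mul_le_right N (M * B)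
  -- (Xᵀ)^e * M = (-1)^e • (M * X^e)
  have hpow : ∀ e : ℕ, (Xᵀ) ^ e * M = ((-1 : k) ^ e) • (M * X ^ e) := by
    intro e
    induction e with
    | zero => simp
    | succ e ih =>
      rw [pow_succ' Xᵀ e, Matrix.mul_assoc, ih, Matrix.mul_smul, ← Matrix.mul_assoc, hXM,
        Matrix.neg_mul, Matrix.mul_assoc, pow_succ' X e, smul_neg, ← neg_smul, pow_succ,
        mul_comm ((-1 : k) ^ e) (-1), neg_one_mul, neg_smul]
  -- skewness of M * X^e for even e
  have hskew : ∀ e : ℕ, Even e → (M * X ^ e)ᵀ = -(M * X ^ e) := by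
    intro e he
    rw [Matrix.transpose_mul, Matrix.transpose_pow, hMt, Matrix.mul_neg, hpow e,
      he.neg_one_pow, one_smul]
  -- hence even rank of X^e for even e
  have heven : ∀ e : ℕ, Even e → Even ((X ^ e).rank) := by
    intro e he
    have := even_rank_of_skew h2 (M * X ^ e) (hskew e he)
    rwa [hrank] at this
  -- conclude
  obtain ⟨t, ht⟩ := hmodd
  have hm1 : 1 ≤ m := by omega
  have h1 : Even ((X ^ (m - 1)).rank) := heven _ ⟨t, by omega⟩
  have h2' : Even ((X ^ (m + 1)).rank) := heven _ ⟨t + 1, by omega⟩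
  have hc := hcount m hm1
  rw [Nat.even_iff] at h1 h2'
  rw [Nat.odd_iff] at hcodd
  omega
end
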